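/- Let g : 𝔻 → ℂ be analytic and univalent with convex image g(𝔻). Then for all z ∈ 𝔻, (1/2)(1 - |z|²)|g'(z)| ≤ dist(g(z), ∂g(𝔻)) ≤ (1 - |z|²)|g'(z)|. -/

import Mathlib

open Metric Set Complex Filter Function Topology

lemma aux_one_add_ne {z w : ℂ} (hz : ‖z‖ < 1) (hw : ‖w‖ < 1) :
    1 + (starRingEnd ℂ) z * w ≠ 0 := by
  intro h0
  have h1 : (starRingEnd ℂ) z * w = -1 := by linear_combination h0
  have : ‖(starRingEnd ℂ) z * w‖ = 1 := by rw [h1]; simp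
  simp only [norm_mul, RCLike.norm_conj] at this
  nlinarith [norm_nonneg z, norm_nonneg w]

lemma aux_mobius_mem {z w : ℂ} (hz : ‖z‖ < 1) (hw : ‖w‖ < 1) :
    ‖(w + z) / (1 + (starRingEnd ℂ) z * w)‖ < 1 := by
  have hd := aux_one_add_ne hz hw
  rw [norm_div, div_lt_one (norm_pos_iff.mpr hd)]
  apply lt_of_pow_lt_pow_left₀ 2 (norm_nonneg _)
  have e1 : ‖w + z‖ ^ 2 = Complex.normSq (w + z) := by
    rw [← Complex.sq_norm]
  have e2 : ‖1 + (starRingEnd ℂ) z * w‖ ^ 2 = Complex.normSq (1 + (starRingEnd ℂ) z * w) := by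
    rw [← Complex.sq_norm]
  rw [e1, e2]
  have hz2 : z.re ^ 2 + z.im ^ 2 < 1 := by
    have h' : ‖z‖ ^ 2 < 1 := by nlinarith [norm_nonneg z]
    rw [Complex.sq_norm, Complex.normSq_apply] at h'
    nlinarith [h']
  have hw2 : w.re ^ 2 + w.im ^ 2 < 1 := by
    have h' : ‖w‖ ^ 2 < 1 := by nlinarith [norm_nonneg w]
    rw [Complex.sq_norm, Complex.normSq_apply] at h'
    nlinarith [h']
  simp only [Complex.normSq_apply, Complex.add_re, Complex.add_im, Complex.mul_re,
    Complex.mul_im, Complex.one_re, Complex.one_im, Complex.conj_re, Complex.conj_im]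
  nlinarith [mul_pos (sub_pos.mpr hz2) (sub_pos.mpr hw2)]

lemma aux_halfplane_ne {β : ℝ} (hβ : 0 < β) {ζ : ℂ} (h : ζ.re < β) :
    2 * (β : ℂ) - ζ ≠ 0 := by
  intro h0
  have : (2 * (β : ℂ) - ζ).re = 0 := by rw [h0]; rfl
  simp [Complex.sub_re, Complex.mul_re] at this
  linarith

lemma aux_halfplane_mem {β : ℝ} (hβ : 0 < β) {ζ : ℂ} (h : ζ.re < β) :
    ‖ζ / (2 * (β : ℂ) - ζ)‖ < 1 := by
  have hd := aux_halfplane_ne hβ h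
  rw [norm_div, div_lt_one (norm_pos_iff.mpr hd)]
  apply lt_of_pow_lt_pow_left₀ 2 (norm_nonneg _)
  have e1 : ‖ζ‖ ^ 2 = Complex.normSq ζ := by rw [← Complex.sq_norm]
  have e2 : ‖2 * (β : ℂ) - ζ‖ ^ 2 = Complex.normSq (2 * (β : ℂ) - ζ) := by
    rw [← Complex.sq_norm]
  rw [e1, e2]
  simp only [Complex.normSq_apply, Complex.sub_re, Complex.sub_im, Complex.mul_re,
    Complex.mul_im, Complex.ofReal_re, Complex.ofReal_im, Complex.re_ofNat, Complex.im_ofNat]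
  nlinarith [mul_pos hβ (sub_pos.mpr h)]

lemma aux_deriv_ne_zero {g : ℂ → ℂ} {s : Set ℂ} (hs : IsOpen s)
    (hg : DifferentiableOn ℂ g s) (hinj : Set.InjOn g s) {z : ℂ} (hz : z ∈ s) :
    deriv g z ≠ 0 := by
  intro hder
  set f : ℂ → ℂ := fun w => g w - g z with hf_def
  have hga : AnalyticAt ℂ g z := hg.analyticAt (hs.mem_nhds hz)
  have hfa : AnalyticAt ℂ f z := hga.sub analyticAt_const
  have hne : ¬ ∀ᶠ w in 𝓝 z, f w = 0 := by
    intro h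
    have h1 : ∀ᶠ w in 𝓝[≠] z, w ∈ s ∧ f w = 0 :=
      ((hs.eventually_mem hz).and h).filter_mono nhdsWithin_le_nhds
    obtain ⟨w, ⟨hws, hfw⟩, hwne⟩ := (h1.and self_mem_nhdsWithin).exists
    exact hwne (hinj hws hz (by simpa [hf_def, sub_eq_zero] using hfw))
  have htop : analyticOrderAt f z ≠ ⊤ := fun h => hne (analyticOrderAt_eq_top.mp h)
  obtain ⟨n, hn⟩ : ∃ n : ℕ, analyticOrderAt f z = n := ⟨(analyticOrderAt f z).toNat, (ENat.coe_toNat htop).symm⟩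
  obtain ⟨h, hha, hh0, hev⟩ := hfa.analyticOrderAt_eq_natCast.mp hn
  have hev' : ∀ᶠ w in 𝓝 z, f w = (w - z) ^ n * h w := by
    simpa [smul_eq_mul] using hev
  have hfz : f z = 0 := by simp [hf_def]
  have hderf : deriv f z = 0 := by
    rw [hf_def]; simpa [deriv_sub_const] using hder
  have hn0 : n ≠ 0 := by
    intro h0
    have := hev'.self_of_nhds
    rw [h0] at this
    simp [hfz] at this
    exact hh0 this.symm
  have hn1 : n ≠ 1 := by
    intro h1
    have hd1 : HasDerivAt (fun w => (w - z) ^ n * h w) (h z) z := by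
      have hsub : HasDerivAt (fun w : ℂ => (w - z) ^ n) 1 z := by
        rw [h1]
        simpa using ((hasDerivAt_id z).sub_const z)
      have hdh : HasDerivAt h (deriv h z) z := hha.differentiableAt.hasDerivAt
      have := hsub.mul hdh
      exact this.congr_deriv (by simp [h1])
    have heq : f =ᶠ[𝓝 z] (fun w => (w - z) ^ n * h w) := hev'
    have : deriv f z = h z := by rw [heq.deriv_eq, hd1.deriv]
    rw [hderf] at this; exact hh0 this.symm
  have hn2 : 2 ≤ n := by omega
  -- n-th root of h z
  set c : ℂ := (h z) ^ ((n : ℂ)⁻¹) with hc_def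
  have hcn : c ^ n = h z := Complex.cpow_nat_inv_pow _ hn0
  have hc0 : c ≠ 0 := by
    intro h0; rw [h0, zero_pow hn0] at hcn; exact hh0 hcn.symm
  set L : ℂ → ℂ := fun w => Complex.log (h w / h z) with hL_def
  have hLa : AnalyticAt ℂ L z := by
    apply AnalyticAt.clog (hha.div analyticAt_const hh0)
    simp [div_self hh0, Complex.one_mem_slitPlane]
  set q : ℂ → ℂ := fun w => c * Complex.exp (L w / n) with hq_def
  have hqa : AnalyticAt ℂ q z := analyticAt_const.mul (hLa.div analyticAt_const (by exact_mod_cast hn0)).cexp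
  set φ : ℂ → ℂ := fun w => (w - z) * q w with hφ_def
  have hφa : AnalyticAt ℂ φ z := (analyticAt_id.sub analyticAt_const).mul hqa
  have hLz : L z = 0 := by simp [hL_def, div_self hh0]
  have hqz : q z = c := by simp [hq_def, hLz]
  have hφz : φ z = 0 := by simp [hφ_def]
  have hφd : HasDerivAt φ c z := by
    have h1 : HasDerivAt (fun w : ℂ => w - z) 1 z := (hasDerivAt_id z).sub_const z
    have h2 : HasDerivAt q (deriv q z) z := hqa.differentiableAt.hasDerivAt
    have := h1.mul h2
    exact this.congr_deriv (by simp [hqz])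
  -- φ is open at z
  rcases hφa.eventually_constant_or_nhds_le_map_nhds with hconst | hmap
  · have : deriv φ z = 0 := by
      have : φ =ᶠ[𝓝 z] fun _ => φ z := hconst
      rw [this.deriv_eq]; simp
    rw [hφd.deriv] at this; exact hc0 this
  have hhne : ∀ᶠ w in 𝓝 z, h w ≠ 0 := hha.continuousAt.eventually_ne hh0
  have hE : ∀ᶠ w in 𝓝 z, w ∈ s ∧ f w = (w - z) ^ n * h w ∧ h w ≠ 0 :=
    (hs.eventually_mem hz).and (hev'.and hhne)
  have hpow : ∀ w, h w ≠ 0 → φ w ^ n = (w - z) ^ n * h w := by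
    intro w hw
    have hexp : Complex.exp (L w / n) ^ n = h w / h z := by
      rw [← Complex.exp_nat_mul]
      rw [mul_div_cancel₀]
      · exact Complex.exp_log (div_ne_zero hw hh0)
      · exact_mod_cast hn0
    calc φ w ^ n = (w - z) ^ n * (c ^ n * Complex.exp (L w / n) ^ n) := by
          simp only [hφ_def, hq_def, mul_pow]
      _ = (w - z) ^ n * h w := by
          rw [hcn, hexp, mul_div_cancel₀ _ hh0]
  set E := {w | w ∈ s ∧ f w = (w - z) ^ n * h w ∧ h w ≠ 0} with hE_def
  have hAmem : φ '' E ∈ 𝓝 (0 : ℂ) := by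
    rw [← hφz]
    exact hmap (image_mem_map hE)
  obtain ⟨ε, hε, hball⟩ := Metric.mem_nhds_iff.mp hAmem
  set ω : ℂ := Complex.exp (2 * Real.pi * Complex.I / n) with hω_def
  have hωn : ω ^ n = 1 := by
    rw [hω_def, ← Complex.exp_nat_mul, mul_div_cancel₀ _ (by exact_mod_cast hn0 : (n:ℂ) ≠ 0)]
    exact Complex.exp_two_pi_mul_I
  have hωabs : ‖ω‖ = 1 := by
    rw [hω_def, Complex.norm_exp]
    norm_num [Complex.div_re]
  have hω1 : ω ≠ 1 := by
    intro h1
    obtain ⟨k, hk⟩ := Complex.exp_eq_one_iff.mp h1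
    have h2π : (2 * (Real.pi : ℂ) * Complex.I) ≠ 0 := by
      simp [Real.pi_ne_zero, Complex.I_ne_zero]
    have hkn : ((k : ℂ) * n) = 1 := by
      rw [div_eq_iff (by exact_mod_cast hn0 : (n:ℂ) ≠ 0)] at hk
      have h3 : (2 * (Real.pi:ℂ) * Complex.I) * ((k:ℂ) * n) = (2 * (Real.pi:ℂ) * Complex.I) * 1 := by
        rw [mul_one]; linear_combination -hk
      exact mul_left_cancel₀ h2π h3
    have hkn' : k * (n : ℤ) = 1 := by exact_mod_cast hkn
    have : (n : ℤ) ∣ 1 := ⟨k, by linarith [hkn']⟩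
    have := Int.le_of_dvd one_pos this
    omega
  set w₀ : ℂ := ((ε / 2 : ℝ) : ℂ) with hw₀_def
  have hw₀0 : w₀ ≠ 0 := by
    simp only [hw₀_def, ne_eq, Complex.ofReal_eq_zero]
    positivity
  have hw₀mem : w₀ ∈ Metric.ball (0:ℂ) ε := by
    rw [Metric.mem_ball, dist_zero_right, hw₀_def, Complex.norm_real, Real.norm_eq_abs,
      abs_of_pos (by positivity)]
    linarith
  have hw₁mem : w₀ * ω ∈ Metric.ball (0:ℂ) ε := by
    rw [Metric.mem_ball, dist_zero_right, norm_mul, hωabs, mul_one,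
      hw₀_def, Complex.norm_real, Real.norm_eq_abs, abs_of_pos (by positivity)]
    linarith
  obtain ⟨a, haE, ha⟩ := hball hw₀mem
  obtain ⟨b, hbE, hb⟩ := hball hw₁mem
  have hab : a ≠ b := by
    intro heq
    apply hω1
    have : w₀ * 1 = w₀ * ω := by
      calc w₀ * 1 = φ a := by rw [mul_one, ha]
        _ = φ b := by rw [heq]
        _ = w₀ * ω := hb
    exact (mul_left_cancel₀ hw₀0 this).symm
  have hfab : f a = f b := by
    have h1 : f a = φ a ^ n := by rw [hpow a haE.2.2]; exact haE.2.1
    have h2 : f b = φ b ^ n := by rw [hpow b hbE.2.2]; exact hbE.2.1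
    rw [h1, h2, ha, hb, mul_pow, hωn, mul_one]
  have hgab : g a = g b := by
    simpa [hf_def, sub_left_inj] using hfab
  exact hab (hinj haE.1 hbE.1 hgab)

lemma aux_strict {g : ℂ → ℂ} {s : Set ℂ} (hs : IsOpen s) (hg : DifferentiableOn ℂ g s)
    {w : ℂ} (hw : w ∈ s) : HasStrictDerivAt g (deriv g w) w := by
  obtain ⟨p, hp⟩ := hg.analyticAt (hs.mem_nhds hw)
  have h1 := hp.hasStrictDerivAt
  have h2 := h1.hasDerivAt.deriv
  rw [← h2] at h1
  exact h1

lemma aux_inverse {g : ℂ → ℂ} {s : Set ℂ} (hs : IsOpen s)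
    (hg : DifferentiableOn ℂ g s) (hinj : Set.InjOn g s) {q : ℂ} (hq : q ∈ g '' s) :
    Function.invFunOn g s q ∈ s ∧ g (Function.invFunOn g s q) = q ∧
      HasDerivAt (Function.invFunOn g s) (deriv g (Function.invFunOn g s q))⁻¹ q := by
  obtain ⟨w, hw, rfl⟩ := hq
  have hex : ∃ a ∈ s, g a = g w := ⟨w, hw, rfl⟩
  have hmem : Function.invFunOn g s (g w) ∈ s := Function.invFunOn_mem hex
  have heq' : g (Function.invFunOn g s (g w)) = g w := Function.invFunOn_eq hex
  have hww : Function.invFunOn g s (g w) = w := hinj hmem hw heq'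
  refine ⟨hmem, heq', ?_⟩
  rw [hww]
  have hst := aux_strict hs hg hw
  have hd0 : deriv g w ≠ 0 := aux_deriv_ne_zero hs hg hinj hw
  have hev : ∀ᶠ x in 𝓝 w, Function.invFunOn g s (g x) = x := by
    filter_upwards [hs.eventually_mem hw] with x hx
    exact hinj (Function.invFunOn_mem ⟨x, hx, rfl⟩) hx (Function.invFunOn_eq ⟨x, hx, rfl⟩)
  exact (HasStrictDerivAt.to_local_left_inverse hst hd0 hev).hasDerivAt

lemma aux_isOpen_image {g : ℂ → ℂ} {s : Set ℂ} (hs : IsOpen s)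
    (hg : DifferentiableOn ℂ g s) (hinj : Set.InjOn g s) : IsOpen (g '' s) := by
  rw [isOpen_iff_mem_nhds]
  rintro q ⟨w, hw, rfl⟩
  have hst := aux_strict hs hg hw
  have hmap := hst.map_nhds_eq (aux_deriv_ne_zero hs hg hinj hw)
  rw [← hmap]
  exact image_mem_map (hs.mem_nhds hw)

/-- If `g` is analytic and univalent on the unit disk with convex image, then for all `z` in
the disk, `(1/2)(1-|z|²)|g'(z)| ≤ dist(g(z), ∂g(𝔻)) ≤ (1-|z|²)|g'(z)|`. -/
theorem stmt12 (g : ℂ → ℂ)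
    (hg : DifferentiableOn ℂ g (Metric.ball (0:ℂ) 1))
    (hinj : Set.InjOn g (Metric.ball (0:ℂ) 1))
    (hconv : Convex ℝ (g '' Metric.ball (0:ℂ) 1)) :
    ∀ z ∈ Metric.ball (0:ℂ) 1,
      (1 / 2) * (1 - ‖z‖ ^ 2) * ‖deriv g z‖
          ≤ Metric.infDist (g z) (frontier (g '' Metric.ball (0:ℂ) 1)) ∧
        Metric.infDist (g z) (frontier (g '' Metric.ball (0:ℂ) 1))
          ≤ (1 - ‖z‖ ^ 2) * ‖deriv g z‖ := by
  intro z hz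
  set B := Metric.ball (0:ℂ) 1 with hB_def
  have hBopen : IsOpen B := Metric.isOpen_ball
  set Ω := g '' B with hΩ_def
  have hΩopen : IsOpen Ω := aux_isOpen_image hBopen hg hinj
  have hznorm : ‖z‖ < 1 := mem_ball_zero_iff.mp hz
  have hz2 : (0:ℝ) < 1 - ‖z‖ ^ 2 := by nlinarith [norm_nonneg z]
  set a := g z with ha_def
  have haΩ : a ∈ Ω := ⟨z, hz, rfl⟩
  have hd0 : deriv g z ≠ 0 := aux_deriv_ne_zero hBopen hg hinj hz
  have hgpos : 0 < ‖deriv g z‖ := norm_pos_iff.mpr hd0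
  have hzz : ((1 - ‖z‖ ^ 2 : ℝ) : ℂ) = 1 - z * (starRingEnd ℂ) z := by
    rw [Complex.mul_conj]
    push_cast
    congr 1
    norm_cast
    rw [Complex.normSq_eq_norm_sq]
  have hkey : ∀ w ∈ B, Function.invFunOn g B (g w) = w := fun w hw =>
    hinj (aux_inverse hBopen hg hinj ⟨w, hw, rfl⟩).1 hw
      (aux_inverse hBopen hg hinj ⟨w, hw, rfl⟩).2.1
  -- frontier is nonempty
  have hfr : (frontier Ω).Nonempty := by
    by_contra hemp
    rw [Set.not_nonempty_iff_eq_empty] at hemp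
    have huniv : Ω = univ := by
      rcases frontier_eq_empty_iff.mp hemp with h | h
      · exact absurd h (Set.nonempty_iff_ne_empty.mp ⟨a, haΩ⟩)
      · exact h
    set G := Function.invFunOn g B with hG_def
    have hGdiff : Differentiable ℂ G := by
      intro q
      have hq : q ∈ Ω := by rw [huniv]; trivial
      exact ((aux_inverse hBopen hg hinj hq).2.2).differentiableAt
    have hGbdd : Bornology.IsBounded (Set.range G) := by
      apply (Metric.isBounded_ball (x := (0:ℂ)) (r := 1)).subset
      rintro _ ⟨q, rfl⟩
      have hq : q ∈ Ω := by rw [huniv]; trivial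
      exact (aux_inverse hBopen hg hinj hq).1
    have h01 := hGdiff.apply_eq_apply_of_bounded hGbdd (g 0) (g (1/2))
    have h0B : (0:ℂ) ∈ B := Metric.mem_ball_self one_pos
    have h12B : (1/2 : ℂ) ∈ B := by
      rw [hB_def, mem_ball_zero_iff]
      norm_num
    rw [hkey 0 h0B, hkey (1/2) h12B] at h01
    norm_num at h01
  set d := Metric.infDist a (frontier Ω) with hd_def
  constructor
  · -- LOWER BOUND
    obtain ⟨y, hyF, hyd⟩ := isClosed_frontier.exists_infDist_eq_dist hfr a
    have hyΩ : y ∉ Ω := fun hy =>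
      Set.disjoint_left.mp (disjoint_frontier_iff_isOpen.mpr hΩopen) hyF hy
    obtain ⟨l, hl⟩ := geometric_hahn_banach_open_point hconv hΩopen hyΩ
    set c : ℂ := ⟨l 1, -(l Complex.I)⟩ with hc_def
    have hlc : ∀ ζ : ℂ, l ζ = (c * ζ).re := by
      intro ζ
      have h1 : l ζ = ζ.re * l 1 + ζ.im * l Complex.I := by
        conv_lhs => rw [← Complex.re_add_im ζ]
        have e1 : ((ζ.re : ℂ)) = ζ.re • (1:ℂ) := by simp
        have e2 : ((ζ.im : ℂ) * Complex.I) = ζ.im • Complex.I := by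
          rw [Complex.real_smul]
        rw [e1, e2, map_add, map_smul, map_smul, smul_eq_mul, smul_eq_mul]
      rw [h1]
      simp only [Complex.mul_re, hc_def]
      ring
    have hlay : l a < l y := hl a haΩ
    set β : ℝ := l y - l a with hβ_def
    have hβpos : 0 < β := sub_pos.mpr hlay
    have hc0 : c ≠ 0 := by
      intro h0
      rw [hlc a, hlc y, h0] at hlay
      simp at hlay
    have hcpos : 0 < ‖c‖ := norm_pos_iff.mpr hc0
    have hbound : ∀ q ∈ Ω, (c * (q - a)).re < β := by
      intro q hq
      have h2 : (c * (q - a)).re = l q - l a := by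
        rw [mul_sub, Complex.sub_re, ← hlc q, ← hlc a]
      rw [h2, hβ_def]
      linarith [hl q hq]
    set φ : ℂ → ℂ := fun w => (w + z) / (1 + (starRingEnd ℂ) z * w) with hφ_def
    have hφmaps : Set.MapsTo φ B B := by
      intro w hw
      rw [hB_def, mem_ball_zero_iff]
      exact aux_mobius_mem hznorm (mem_ball_zero_iff.mp hw)
    have hφ0 : φ 0 = z := by simp [hφ_def]
    have hφd : HasDerivAt φ (((1 - ‖z‖ ^ 2 : ℝ) : ℂ)) 0 := by
      have h1 : HasDerivAt (fun w : ℂ => w + z) 1 0 := (hasDerivAt_id 0).add_const z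
      have h2 : HasDerivAt (fun w : ℂ => 1 + (starRingEnd ℂ) z * w) ((starRingEnd ℂ) z) 0 := by
        simpa using ((hasDerivAt_id 0).const_mul ((starRingEnd ℂ) z)).const_add 1
      have hne0 : (1 + (starRingEnd ℂ) z * (0:ℂ)) ≠ 0 := by
        simpa using aux_one_add_ne hznorm (show ‖(0:ℂ)‖ < 1 by simp)
      have h3 := h1.div h2 hne0
      refine h3.congr_deriv (Eq.symm ?_)
      rw [hzz]
      field_simp
      ring
    have hgφ : HasDerivAt (fun w => g (φ w)) (deriv g z * ((1 - ‖z‖ ^ 2 : ℝ) : ℂ)) 0 := by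
      have hgz : HasDerivAt g (deriv g z) (φ 0) := by
        rw [hφ0]
        exact (hg.differentiableAt (hBopen.mem_nhds hz)).hasDerivAt
      exact hgz.comp 0 hφd
    set u : ℂ → ℂ := fun w => c * (g (φ w) - a) with hu_def
    have hu0 : u 0 = 0 := by simp [hu_def, hφ0, ha_def]
    have hud : HasDerivAt u (c * (deriv g z * ((1 - ‖z‖ ^ 2 : ℝ) : ℂ))) 0 :=
      (hgφ.sub_const a).const_mul c
    set F : ℂ → ℂ := fun w => u w / (2 * (β:ℂ) - u w) with hF_def
    have hure : ∀ w ∈ B, (u w).re < β := fun w hw =>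
      hbound _ ⟨φ w, hφmaps hw, rfl⟩
    have hFmaps : Set.MapsTo F B (Metric.ball (0:ℂ) 1) := by
      intro w hw
      rw [mem_ball_zero_iff]
      exact aux_halfplane_mem hβpos (hure w hw)
    have hFdiff : DifferentiableOn ℂ F B := by
      intro w hw
      apply DifferentiableAt.differentiableWithinAt
      have hφdiff : DifferentiableAt ℂ φ w := by
        apply DifferentiableAt.div
        · fun_prop
        · fun_prop
        · exact aux_one_add_ne hznorm (mem_ball_zero_iff.mp hw)
      have hudiff : DifferentiableAt ℂ u w := by
        apply DifferentiableAt.const_mul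
        apply DifferentiableAt.sub_const
        exact (hg.differentiableAt (hBopen.mem_nhds (hφmaps hw))).comp w hφdiff
      exact hudiff.div ((differentiableAt_const _).sub hudiff)
        (aux_halfplane_ne hβpos (hure w hw))
    have hF0 : F 0 = 0 := by simp [hF_def, hu0]
    have hFd : HasDerivAt F (c * (deriv g z * ((1 - ‖z‖ ^ 2 : ℝ) : ℂ)) / (2 * (β:ℂ))) 0 := by
      have hden : HasDerivAt (fun w => 2 * (β:ℂ) - u w)
          (-(c * (deriv g z * ((1 - ‖z‖ ^ 2 : ℝ) : ℂ)))) 0 := hud.const_sub _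
      have hdne : 2 * (β:ℂ) - u 0 ≠ 0 := by
        rw [hu0, sub_zero]
        simpa using aux_halfplane_ne hβpos (show (0:ℂ).re < β by simpa using hβpos)
      have h3 := hud.div hden hdne
      refine h3.congr_deriv (Eq.symm ?_)
      rw [hu0]
      have h2β : 2 * (β:ℂ) ≠ 0 := by
        simpa using aux_halfplane_ne hβpos (show (0:ℂ).re < β by simpa using hβpos)
      have hβ0 : (β:ℂ) ≠ 0 := by exact_mod_cast hβpos.ne'
      field_simp
      ring
    have hmem0 : (0:ℂ) ∈ B := Metric.mem_ball_self one_pos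
    have hFmaps' : Set.MapsTo F B (Metric.ball (F 0) 1) := by rw [hF0]; exact hFmaps
    have hschwarz := Complex.norm_dslope_le_div_of_mapsTo_ball hFdiff (hFmaps'.mono_right Metric.ball_subset_closedBall) hmem0
    rw [dslope_same, hFd.deriv] at hschwarz
    have hnorm2β : ‖(2 * (β:ℂ))‖ = 2 * β := by
      rw [norm_mul, Complex.norm_real, Real.norm_eq_abs, abs_of_pos hβpos]
      norm_num
    have hnormval : ‖c * (deriv g z * ((1 - ‖z‖ ^ 2 : ℝ) : ℂ)) / (2 * (β:ℂ))‖
        = ‖c‖ * (‖deriv g z‖ * (1 - ‖z‖ ^ 2)) / (2 * β) := by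
      rw [norm_div, norm_mul, norm_mul, hnorm2β, Complex.norm_real, Real.norm_eq_abs,
        abs_of_pos hz2]
    rw [hnormval] at hschwarz
    have hschwarz2 : ‖c‖ * (‖deriv g z‖ * (1 - ‖z‖ ^ 2)) ≤ 2 * β := by
      rw [div_le_div_iff₀ (by positivity) (by norm_num : (0:ℝ) < 1)] at hschwarz
      linarith [hschwarz]
    have hβd : β ≤ ‖c‖ * d := by
      have h1 : β = (c * (y - a)).re := by
        rw [mul_sub, Complex.sub_re, ← hlc y, ← hlc a, hβ_def]
      have h2 : (c * (y - a)).re ≤ ‖c * (y - a)‖ := Complex.re_le_norm _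
      have h3 : ‖c * (y - a)‖ = ‖c‖ * ‖y - a‖ := norm_mul _ _
      have h4 : ‖y - a‖ = dist a y := by rw [dist_eq_norm, norm_sub_rev]
      rw [h1]
      calc (c * (y - a)).re ≤ ‖c‖ * ‖y - a‖ := h3 ▸ h2
        _ = ‖c‖ * d := by rw [h4, hd_def, hyd]
    have h5 : ‖c‖ * (‖deriv g z‖ * (1 - ‖z‖ ^ 2)) ≤ ‖c‖ * (2 * d) := by nlinarith
    have h6 : ‖deriv g z‖ * (1 - ‖z‖ ^ 2) ≤ 2 * d := le_of_mul_le_mul_left h5 hcpos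
    linarith
  · -- UPPER BOUND
    rcases le_or_gt d 0 with hdle | hdpos
    · exact hdle.trans (by positivity)
    have hball_fr : Metric.ball a d ⊆ (frontier Ω)ᶜ := Metric.ball_infDist_subset_compl
    have hballsub : Metric.ball a d ⊆ Ω := by
      by_contra hnot
      rw [Set.not_subset] at hnot
      obtain ⟨q, hq, hqΩ⟩ := hnot
      have hqcl : q ∈ (closure Ω)ᶜ := by
        intro hqc
        exact hball_fr hq ⟨hqc, by rwa [hΩopen.interior_eq]⟩
      have hpre : IsPreconnected (Metric.ball a d) := (convex_ball a d).isPreconnected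
      have hcover : Metric.ball a d ⊆ Ω ∪ (closure Ω)ᶜ := by
        intro x hx
        by_cases hxc : x ∈ closure Ω
        · left
          by_contra hxΩ
          exact hball_fr hx ⟨hxc, by rwa [hΩopen.interior_eq]⟩
        · right; exact hxc
      obtain ⟨x, hx⟩ := hpre Ω (closure Ω)ᶜ hΩopen isClosed_closure.isOpen_compl hcover
        ⟨a, Metric.mem_ball_self hdpos, haΩ⟩ ⟨q, hq, hqcl⟩
      exact hx.2.2 (subset_closure hx.2.1)
    set G := Function.invFunOn g B with hG_def
    have hGa : G a = z := hkey z hz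
    have hGmem : ∀ q ∈ Metric.ball a d, G q ∈ B := fun q hq =>
      (aux_inverse hBopen hg hinj (hballsub hq)).1
    have hGnorm : ∀ q ∈ Metric.ball a d, ‖G q‖ < 1 := fun q hq =>
      mem_ball_zero_iff.mp (hGmem q hq)
    have hmobeq : ∀ w : ℂ, (w + -z) / (1 + (starRingEnd ℂ) (-z) * w)
        = (w - z) / (1 - (starRingEnd ℂ) z * w) := by
      intro w
      rw [map_neg, neg_mul, ← sub_eq_add_neg, ← sub_eq_add_neg]
    have hmob : ∀ w : ℂ, ‖w‖ < 1 → ‖(w - z) / (1 - (starRingEnd ℂ) z * w)‖ < 1 := by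
      intro w hw
      have h := aux_mobius_mem (z := -z) (by simpa using hznorm) hw
      rwa [hmobeq w] at h
    have hmobne : ∀ w : ℂ, ‖w‖ < 1 → (1 - (starRingEnd ℂ) z * w) ≠ 0 := by
      intro w hw
      have h := aux_one_add_ne (z := -z) (by simpa using hznorm) hw
      rwa [map_neg, neg_mul, ← sub_eq_add_neg] at h
    set H : ℂ → ℂ := fun q => (G q - z) / (1 - (starRingEnd ℂ) z * G q) with hH_def
    have hHdiff : DifferentiableOn ℂ H (Metric.ball a d) := by
      intro q hq
      have hGd : DifferentiableAt ℂ G q :=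
        ((aux_inverse hBopen hg hinj (hballsub hq)).2.2).differentiableAt
      exact ((hGd.sub_const z).div ((differentiableAt_const _).sub (hGd.const_mul _))
        (hmobne _ (hGnorm q hq))).differentiableWithinAt
    have hHa : H a = 0 := by simp [hH_def, hGa]
    have hHmaps : Set.MapsTo H (Metric.ball a d) (Metric.ball (H a) 1) := by
      rw [hHa]
      intro q hq
      rw [mem_ball_zero_iff]
      exact hmob (G q) (hGnorm q hq)
    have hmema : a ∈ Metric.ball a d := Metric.mem_ball_self hdpos
    have hschwarz := Complex.norm_dslope_le_div_of_mapsTo_ball hHdiff (hHmaps.mono_right Metric.ball_subset_closedBall) hmema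
    rw [dslope_same] at hschwarz
    have hGd : HasDerivAt G (deriv g z)⁻¹ a := by
      have h := (aux_inverse hBopen hg hinj haΩ).2.2
      rw [← hG_def] at h
      rwa [hGa] at h
    have hHd : HasDerivAt H ((deriv g z)⁻¹ / ((1 - ‖z‖ ^ 2 : ℝ) : ℂ)) a := by
      have hnum : HasDerivAt (fun q => G q - z) (deriv g z)⁻¹ a := hGd.sub_const z
      have hden : HasDerivAt (fun q => 1 - (starRingEnd ℂ) z * G q)
          (-((starRingEnd ℂ) z * (deriv g z)⁻¹)) a := by
        simpa using (hGd.const_mul ((starRingEnd ℂ) z)).const_sub 1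
      have hdne : 1 - (starRingEnd ℂ) z * G a ≠ 0 := by
        rw [hGa]; exact hmobne z hznorm
      have h3 := hnum.div hden hdne
      refine h3.congr_deriv (Eq.symm ?_)
      rw [hGa, hzz]
      have hdz : (1:ℂ) - (starRingEnd ℂ) z * z ≠ 0 := hmobne z hznorm
      have hdz' : (1:ℂ) - z * (starRingEnd ℂ) z ≠ 0 := by
        rwa [mul_comm ((starRingEnd ℂ) z) z] at hdz
      rw [div_eq_div_iff hdz' (pow_ne_zero 2 hdz)]
      ring
    rw [hHd.deriv] at hschwarz
    have hnormH : ‖(deriv g z)⁻¹ / ((1 - ‖z‖ ^ 2 : ℝ) : ℂ)‖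
        = (‖deriv g z‖ * (1 - ‖z‖ ^ 2))⁻¹ := by
      rw [norm_div, norm_inv, Complex.norm_real, Real.norm_eq_abs, abs_of_pos hz2,
        mul_inv, div_eq_mul_inv]
    rw [hnormH, one_div] at hschwarz
    have h7 : d ≤ ‖deriv g z‖ * (1 - ‖z‖ ^ 2) :=
      (inv_le_inv₀ (by positivity) hdpos).mp hschwarz
    linarith [h7]
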